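/- arXiv:0706.1790 — 11 statements merged into one kernel-verified Lean document; each statement's English description precedes it below -/
import Mathlib

section
/- Let n ≥ 1 and let f : ℝ₊ⁿ → ℝ₊ be an index function. If α is an f-optimizing policy function on the nonempty compact subsets of ℝ₊ⁿ such that α(U) is Pareto optimal in U for every nonempty compact U ⊆ ℝ₊ⁿ, then f is monotone, i.e., u ⪯ v implies f(u) ≤ f(v) for all u, v ∈ ℝ₊ⁿ. -/
/-- If `α` is an `f`-optimizing policy function on the nonempty compact subsets of `ℝ₊ⁿ`
which is Pareto optimal, then the index function `f` is monotone. -/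
theorem paretoOptimal_optimizing_implies_monotoneIndex
    (n : ℕ) (hn : 1 ≤ n) (f : (Fin n → ℝ) → ℝ)
    (hf_nonneg : ∀ u : Fin n → ℝ, (∀ k, 0 ≤ u k) → 0 ≤ f u)
    (α : Set (Fin n → ℝ) → (Fin n → ℝ))
    (hα_pol : ∀ U : Set (Fin n → ℝ), U.Nonempty → IsCompact U →
      U ⊆ {u | ∀ k, 0 ≤ u k} → α U ∈ U)
    (hα_opt : ∀ U : Set (Fin n → ℝ), U.Nonempty → IsCompact U →
      U ⊆ {u | ∀ k, 0 ≤ u k} → f (α U) = sSup (f '' U))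
    (hα_pareto : ∀ U : Set (Fin n → ℝ), U.Nonempty → IsCompact U →
      U ⊆ {u | ∀ k, 0 ≤ u k} → ∀ v ∈ U, (∀ k, α U k ≤ v k) → v = α U) :
    ∀ u v : Fin n → ℝ, (∀ k, 0 ≤ u k) → (∀ k, 0 ≤ v k) →
      (∀ k, u k ≤ v k) → f u ≤ f v := by
  intro u v hu hv huv
  set U : Set (Fin n → ℝ) := {u, v} with hU
  have hne : U.Nonempty := ⟨u, Or.inl rfl⟩
  have hcpt : IsCompact U := (Set.toFinite U).isCompact
  have hsub : U ⊆ {w | ∀ k, 0 ≤ w k} := by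
    rintro w (rfl | rfl) <;> [exact hu; exact hv]
  have himg : f '' U = {f u, f v} := by
    simp [hU, Set.image_pair]
  have hopt : f (α U) = max (f u) (f v) := by
    rw [hα_opt U hne hcpt hsub, himg, csSup_pair]
  rcases hα_pol U hne hcpt hsub with h | h
  · have hveq : v = α U := hα_pareto U hne hcpt hsub v (Or.inr rfl)
      (fun k => h ▸ huv k)
    exact le_of_eq (by rw [hveq, h])
  · rw [h] at hopt
    rw [hopt]
    exact le_max_left _ _
end

section
/- There exists a nonempty compact convex set C ⊆ ℝ₊³ whose Pareto set (the set of points of C that are maximal for the componentwise order ⪯) is not a closed subset of ℝ³. -/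
open Filter Topology

/-- The counterexample set: convex hull of the quarter disk
`{(x,y,0) : x,y ≥ 0, x²+y² ≤ 1}` and the apex `(1,0,1)`. -/
def myC : Set (Fin 3 → ℝ) :=
  {u | 0 ≤ u 2 ∧ u 2 ≤ 1 ∧ 0 ≤ u 1 ∧ u 2 ≤ u 0 ∧
    (u 0 - u 2) ^ 2 + (u 1) ^ 2 ≤ (1 - u 2) ^ 2}

lemma myC_closed : IsClosed myC := by
  have h1 : IsClosed {u : Fin 3 → ℝ | 0 ≤ u 2} :=
    isClosed_le continuous_const (continuous_apply 2)
  have h2 : IsClosed {u : Fin 3 → ℝ | u 2 ≤ 1} :=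
    isClosed_le (continuous_apply 2) continuous_const
  have h3 : IsClosed {u : Fin 3 → ℝ | 0 ≤ u 1} :=
    isClosed_le continuous_const (continuous_apply 1)
  have h4 : IsClosed {u : Fin 3 → ℝ | u 2 ≤ u 0} :=
    isClosed_le (continuous_apply 2) (continuous_apply 0)
  have h5 : IsClosed {u : Fin 3 → ℝ | (u 0 - u 2) ^ 2 + (u 1) ^ 2 ≤ (1 - u 2) ^ 2} :=
    isClosed_le (by fun_prop) (by fun_prop)
  exact h1.inter (h2.inter (h3.inter (h4.inter h5)))

lemma myC_sub_Icc : myC ⊆ Set.Icc (0 : Fin 3 → ℝ) 1 := by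
  rintro u ⟨h1, h2, h3, h4, h5⟩
  constructor
  · intro k
    fin_cases k
    · exact le_trans h1 h4
    · exact h3
    · exact h1
  · intro k
    fin_cases k
    · show u 0 ≤ 1; nlinarith
    · show u 1 ≤ 1; nlinarith
    · exact h2

lemma myC_convex : Convex ℝ myC := by
  rintro u ⟨hu1, hu2, hu3, hu4, hu5⟩ v ⟨hv1, hv2, hv3, hv4, hv5⟩ a b ha hb hab
  have hCu : (0:ℝ) ≤ 1 - u 2 := by linarith
  have hCv : (0:ℝ) ≤ 1 - v 2 := by linarith
  have key : (u 0 - u 2) * (v 0 - v 2) + u 1 * v 1 ≤ (1 - u 2) * (1 - v 2) := by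
    nlinarith [sq_nonneg ((u 0 - u 2) * (v 1) - (v 0 - v 2) * (u 1)),
      mul_nonneg hCu hCv, mul_nonneg (sub_nonneg.2 hu4) hu3,
      mul_nonneg (sub_nonneg.2 hv4) hv3,
      mul_nonneg (mul_nonneg (sub_nonneg.2 hu4) hu3) (mul_nonneg (sub_nonneg.2 hv4) hv3)]
  simp only [myC, Set.mem_setOf_eq, Pi.add_apply, Pi.smul_apply, smul_eq_mul]
  have h1 : (1 : ℝ) - (a * u 2 + b * v 2) = a * (1 - u 2) + b * (1 - v 2) := by linarith
  refine ⟨by positivity, ?_, by positivity, ?_, ?_⟩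
  · nlinarith
  · nlinarith [mul_nonneg ha (sub_nonneg.2 hu4), mul_nonneg hb (sub_nonneg.2 hv4)]
  · rw [h1]
    nlinarith [mul_nonneg (mul_nonneg ha hb) (sub_nonneg.2 key),
      mul_nonneg (sq_nonneg a) (sub_nonneg.2 hu5),
      mul_nonneg (sq_nonneg b) (sub_nonneg.2 hv5)]

/-- Points `(c, √(1-c²), 0)` with `0 ≤ c < 1` are Pareto-maximal in `myC`. -/
lemma myC_maximal (c : ℝ) (hc0 : 0 ≤ c) (hc1 : c < 1) :
    (![c, Real.sqrt (1 - c ^ 2), 0] : Fin 3 → ℝ) ∈ myC ∧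
    ∀ v ∈ myC, (∀ k, (![c, Real.sqrt (1 - c ^ 2), 0] : Fin 3 → ℝ) k ≤ v k) →
      v = ![c, Real.sqrt (1 - c ^ 2), 0] := by
  set s : ℝ := Real.sqrt (1 - c ^ 2) with hs
  have hc2 : (0:ℝ) < 1 - c ^ 2 := by nlinarith
  have hs2 : s ^ 2 = 1 - c ^ 2 := Real.sq_sqrt (le_of_lt hc2)
  have hspos : 0 < s := Real.sqrt_pos.2 hc2
  constructor
  · refine ⟨le_refl 0, by norm_num [Matrix.cons_val_two], le_of_lt hspos, hc0, ?_⟩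
    show (c - 0) ^ 2 + s ^ 2 ≤ (1 - 0) ^ 2
    rw [hs2]; ring_nf; norm_num
  · rintro v ⟨hv1, hv2, hv3, hv4, hv5⟩ hdom
    have hd0 : c ≤ v 0 := hdom 0
    have hd1 : s ≤ v 1 := hdom 1
    have hd2 : (0:ℝ) ≤ v 2 := by simpa using hdom 2
    -- v 0 ≤ 1
    have hX1 : v 0 ≤ 1 := by nlinarith
    -- Z * (1 - X) = 0
    have hZX : v 2 * (1 - v 0) = 0 := by
      have h1 : v 2 * (1 - v 0) ≤ 0 := by nlinarith
      have h2 : 0 ≤ v 2 * (1 - v 0) := mul_nonneg hd2 (by linarith)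
      linarith
    have hZ0 : v 2 = 0 := by
      rcases mul_eq_zero.1 hZX with h | h
      · exact h
      · exfalso
        have hX : v 0 = 1 := by linarith
        nlinarith
    have hX : v 0 = c := by nlinarith
    have hY : v 1 = s := by nlinarith
    funext k
    fin_cases k
    · simpa using hX
    · simpa using hY
    · simpa using hZ0

/-- There exists a nonempty compact convex subset of `ℝ₊³` whose Pareto set
(the set of maximal points for the componentwise order) is not closed. -/
theorem exists_compact_convex_pareto_set_not_closed :
    ∃ C : Set (Fin 3 → ℝ), C.Nonempty ∧ IsCompact C ∧ Convex ℝ C ∧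
      C ⊆ {u | ∀ k, 0 ≤ u k} ∧
      ¬ IsClosed {u ∈ C | ∀ v ∈ C, (∀ k, u k ≤ v k) → v = u} := by
  refine ⟨myC, ⟨0, ?_⟩, ?_, myC_convex, ?_, ?_⟩
  · refine ⟨le_refl _, ?_, le_refl _, le_refl _, ?_⟩ <;> norm_num
  · exact (isCompact_Icc).of_isClosed_subset myC_closed myC_sub_Icc
  · intro u hu k
    exact (myC_sub_Icc hu).1 k
  · intro hcl
    set P := {u ∈ myC | ∀ v ∈ myC, (∀ k, u k ≤ v k) → v = u} with hP
    -- the sequence of maximal points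
    set g : ℕ → (Fin 3 → ℝ) :=
      fun n => ![1 - 1 / (n + 1), Real.sqrt (1 - (1 - 1 / (n + 1)) ^ 2), 0] with hg
    have hcn : ∀ n : ℕ, (0:ℝ) ≤ 1 - 1 / (n + 1) ∧ (1 - 1 / (n + 1) : ℝ) < 1 := by
      intro n
      constructor
      · have : (1:ℝ) / (n + 1) ≤ 1 := by
          rw [div_le_one (by positivity)]
          linarith [Nat.cast_nonneg (α := ℝ) n]
        linarith
      · have : (0:ℝ) < 1 / (n + 1) := by positivity
        linarith
    have hgP : ∀ n, g n ∈ P := by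
      intro n
      obtain ⟨h1, h2⟩ := myC_maximal (1 - 1 / (n + 1)) (hcn n).1 (hcn n).2
      exact ⟨h1, h2⟩
    -- the limit point
    have hlim : Tendsto g atTop (𝓝 (![1, 0, 0] : Fin 3 → ℝ)) := by
      rw [tendsto_pi_nhds]
      intro k
      have hc : Tendsto (fun n : ℕ => (1 - 1 / (n + 1) : ℝ)) atTop (𝓝 1) := by
        have := tendsto_one_div_add_atTop_nhds_zero_nat (𝕜 := ℝ)
        have h := this.const_sub 1
        simpa using h
      fin_cases k
      · simpa [hg] using hc
      · have h1 : Tendsto (fun n : ℕ => (1 - (1 - 1 / (n + 1)) ^ 2 : ℝ)) atTop (𝓝 0) := by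
          have := (hc.pow 2).const_sub 1
          simpa using this
        have h2 := (Real.continuous_sqrt.tendsto 0).comp h1
        simpa [hg, Real.sqrt_zero, Function.comp_def] using h2
      · simp [hg]
    have hmem : (![1, 0, 0] : Fin 3 → ℝ) ∈ P :=
      hcl.mem_of_tendsto hlim (Filter.Eventually.of_forall hgP)
    -- but (1,0,0) is dominated by (1,0,1)
    have hvC : (![1, 0, 1] : Fin 3 → ℝ) ∈ myC := by
      refine ⟨?_, ?_, ?_, ?_, ?_⟩ <;> norm_num [Matrix.cons_val_two]
    have := hmem.2 ![1, 0, 1] hvC (by intro k; fin_cases k <;> norm_num)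
    have h2 := congrFun this 2
    norm_num [Matrix.cons_val_two] at h2
end

section
/- The map sending a nonempty compact convex subset U of ℝ₊² to the closure of its Pareto set is not continuous for the Hausdorff metric: there exist nonempty compact convex sets Cₙ, C ⊆ ℝ₊² with Cₙ → C in Hausdorff distance, such that the closures of the Pareto sets of the Cₙ do not converge in Hausdorff distance to the closure of the Pareto set of C. -/
open Metric Filter

/-- auxiliary: the tilted square. -/
def CsetAux (ε : ℝ) : Set (Fin 2 → ℝ) :=
  {u | 0 ≤ u 0 ∧ u 0 ≤ 1 ∧ 0 ≤ u 1 ∧ u 1 + ε * u 0 ≤ 1 + ε}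

lemma CsetAux_convex (ε : ℝ) (h0 : 0 ≤ ε) : Convex ℝ (CsetAux ε) := by
  intro u hu v hv a b ha hb hab
  obtain ⟨hu0, hu1, hu2, hu3⟩ := hu
  obtain ⟨hv0, hv1, hv2, hv3⟩ := hv
  refine ⟨?_, ?_, ?_, ?_⟩ <;>
    simp only [Pi.add_apply, Pi.smul_apply, smul_eq_mul]
  · positivity
  · nlinarith
  · positivity
  · nlinarith [mul_nonneg ha hu0, mul_nonneg hb hv0, mul_le_mul_of_nonneg_left hu3 ha,
      mul_le_mul_of_nonneg_left hv3 hb]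

lemma CsetAux_closed (ε : ℝ) : IsClosed (CsetAux ε) := by
  have : CsetAux ε = {u : Fin 2 → ℝ | 0 ≤ u 0} ∩ {u | u 0 ≤ 1} ∩ {u | 0 ≤ u 1} ∩
      {u | u 1 + ε * u 0 ≤ 1 + ε} := by
    ext u; simp [CsetAux]; tauto
  rw [this]
  refine (((isClosed_le continuous_const (continuous_apply 0)).inter
    (isClosed_le (continuous_apply 0) continuous_const)).inter
    (isClosed_le continuous_const (continuous_apply 1))).inter
    (isClosed_le (by continuity) continuous_const)

lemma CsetAux_compact (ε : ℝ) (h0 : 0 ≤ ε) (h1 : ε ≤ 1) : IsCompact (CsetAux ε) := by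
  refine IsCompact.of_isClosed_subset (isCompact_Icc (a := fun _ : Fin 2 => (0:ℝ))
    (b := fun _ => 2)) (CsetAux_closed ε) ?_
  rintro u ⟨hu0, hu1, hu2, hu3⟩
  constructor <;> intro k <;> fin_cases k <;> simp <;> nlinarith [mul_nonneg h0 hu0]

/-- The map sending a nonempty compact convex subset of `ℝ₊²` to the closure of its Pareto
set is not continuous for the Hausdorff metric: there is a sequence `Cₘ` of nonempty compact
convex subsets of `ℝ₊²` converging in Hausdorff distance to a nonempty compact convex
`D ⊆ ℝ₊²` such that the closures of the Pareto sets of the `Cₘ` do not converge in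
Hausdorff distance to the closure of the Pareto set of `D`. -/
theorem closure_pareto_not_continuous :
    ∃ (C : ℕ → Set (Fin 2 → ℝ)) (D : Set (Fin 2 → ℝ)),
      (∀ m, (C m).Nonempty ∧ IsCompact (C m) ∧ Convex ℝ (C m) ∧
        C m ⊆ {u | ∀ k, 0 ≤ u k}) ∧
      D.Nonempty ∧ IsCompact D ∧ Convex ℝ D ∧ D ⊆ {u | ∀ k, 0 ≤ u k} ∧
      Filter.Tendsto (fun m => Metric.hausdorffDist (C m) D) Filter.atTop (nhds 0) ∧
      ¬ Filter.Tendsto (fun m => Metric.hausdorffDist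
          (closure {u ∈ C m | ∀ v ∈ C m, (∀ k, u k ≤ v k) → v = u})
          (closure {u ∈ D | ∀ v ∈ D, (∀ k, u k ≤ v k) → v = u}))
        Filter.atTop (nhds 0) := by
  have he_pos : ∀ m : ℕ, 0 < 1 / ((m : ℝ) + 1) := fun m => by positivity
  have he_le : ∀ m : ℕ, 1 / ((m : ℝ) + 1) ≤ 1 := fun m => by
    rw [div_le_one (by positivity)]; linarith [Nat.cast_nonneg (α := ℝ) m]
  refine ⟨fun m => CsetAux (1 / (m + 1)), CsetAux 0, fun m => ⟨?_, ?_, ?_, ?_⟩,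
    ?_, ?_, ?_, ?_, ?_, ?_⟩
  · exact ⟨fun _ => 0, le_rfl, zero_le_one, le_rfl, by simp; positivity⟩
  · exact CsetAux_compact _ (le_of_lt (he_pos m)) (he_le m)
  · exact CsetAux_convex _ (le_of_lt (he_pos m))
  · rintro u ⟨hu0, hu1, hu2, hu3⟩ k
    fin_cases k <;> assumption
  · exact ⟨fun _ => 0, le_rfl, zero_le_one, le_rfl, by norm_num⟩
  · exact CsetAux_compact 0 le_rfl zero_le_one
  · exact CsetAux_convex 0 le_rfl
  · rintro u ⟨hu0, hu1, hu2, hu3⟩ k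
    fin_cases k <;> assumption
  -- convergence of C m to D
  · have key : ∀ m : ℕ, hausdorffDist (CsetAux (1 / (m + 1))) (CsetAux 0) ≤ 1 / (m + 1) := by
      intro m
      set ε : ℝ := 1 / ((m : ℝ) + 1) with hε
      apply hausdorffDist_le_of_mem_dist (le_of_lt (he_pos m))
      · rintro x ⟨hx0, hx1, hx2, hx3⟩
        refine ⟨Function.update x 1 (min (x 1) 1), ⟨?_, ?_, ?_, ?_⟩, ?_⟩
        · simpa using hx0
        · simpa using hx1
        · simp [le_min_iff]; exact hx2
        · simp [min_le_iff]
        · rw [dist_pi_le_iff (le_of_lt (he_pos m))]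
          intro k
          fin_cases k
          · simp
            positivity
          · simp [Function.update, Real.dist_eq]
            rcases le_or_gt (x 1) 1 with h | h
            · simp [min_eq_left h]; positivity
            · rw [min_eq_right (le_of_lt h), abs_of_nonneg (by linarith)]
              have hεx : 0 ≤ ε * x 0 := mul_nonneg (le_of_lt (he_pos m)) hx0
              have hod : (1:ℝ)/((m:ℝ)+1) = ((m:ℝ)+1)⁻¹ := one_div _
              linarith
      · rintro x ⟨hx0, hx1, hx2, hx3⟩
        refine ⟨x, ⟨hx0, hx1, hx2, ?_⟩, by rw [dist_self]; positivity⟩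
        have : (1/((m:ℝ)+1)) * x 0 ≤ 1/((m:ℝ)+1) := by
          nlinarith [he_pos m]
        linarith
    have h1 : Tendsto (fun m : ℕ => 1 / ((m : ℝ) + 1)) atTop (nhds 0) :=
      tendsto_one_div_add_atTop_nhds_zero_nat
    exact squeeze_zero (fun m => hausdorffDist_nonneg) key h1
  -- non-convergence of Pareto closures
  · intro hcontra
    -- the Pareto set of D is the singleton {(1,1)}
    have hD : {u ∈ CsetAux 0 | ∀ v ∈ CsetAux 0, (∀ k, u k ≤ v k) → v = u} =
        {fun _ => (1:ℝ)} := by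
      ext u
      constructor
      · rintro ⟨⟨hu0, hu1, hu2, hu3⟩, hmax⟩
        have h1 : (fun _ : Fin 2 => (1:ℝ)) ∈ CsetAux 0 := by norm_num [CsetAux]
        have harg : ∀ k, u k ≤ (fun _ : Fin 2 => (1:ℝ)) k := by
          intro k; fin_cases k
          · exact hu1
          · show u 1 ≤ 1; linarith
        have := hmax _ h1 harg
        exact this.symm
      · rintro rfl
        refine ⟨by norm_num [CsetAux], fun v hv hle => ?_⟩
        obtain ⟨hv0, hv1, hv2, hv3⟩ := hv
        have hv3' : v 1 ≤ 1 := by linarith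
        funext k
        fin_cases k
        · exact le_antisymm hv1 (hle 0)
        · exact le_antisymm hv3' (hle 1)
    -- the point (0, 1 + ε) is Pareto for C m
    have hPm : ∀ m : ℕ, (![0, 1 + 1/((m:ℝ)+1)]) ∈
        {u ∈ CsetAux (1/((m:ℝ)+1)) |
          ∀ v ∈ CsetAux (1/((m:ℝ)+1)), (∀ k, u k ≤ v k) → v = u} := by
      intro m
      refine ⟨⟨by norm_num, by norm_num, by norm_num; positivity, by norm_num⟩, ?_⟩
      rintro v ⟨hv0, hv1, hv2, hv3⟩ hle
      have h0 : (0:ℝ) ≤ v 0 := by simpa using hle 0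
      have h1 : 1 + 1/((m:ℝ)+1) ≤ v 1 := by
        have := hle 1; simpa [one_div] using this
      have hεx : 0 ≤ 1/((m:ℝ)+1) * v 0 := by positivity
      have hv0' : v 0 = 0 := by
        have hx : 1/((m:ℝ)+1) * v 0 ≤ 0 := by linarith
        refine le_antisymm ?_ hv0
        nlinarith [he_pos m]
      have hmz : 1/((m:ℝ)+1) * v 0 = 0 := by rw [hv0', mul_zero]
      have hv1' : v 1 = 1 + 1/((m:ℝ)+1) := le_antisymm (by linarith) h1
      funext k
      fin_cases k <;> simp [hv0', hv1', one_div]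
    -- derive a contradiction
    have hev := hcontra.eventually_lt_const (by norm_num : (0:ℝ) < 1)
    obtain ⟨m, hm⟩ := hev.exists
    -- but the Hausdorff distance is at least 1
    have hbig : (1:ℝ) ≤ hausdorffDist
        (closure {u ∈ CsetAux (1/((m:ℝ)+1)) |
          ∀ v ∈ CsetAux (1/((m:ℝ)+1)), (∀ k, u k ≤ v k) → v = u})
        (closure {u ∈ CsetAux 0 | ∀ v ∈ CsetAux 0, (∀ k, u k ≤ v k) → v = u}) := by
      set P := {u ∈ CsetAux (1/((m:ℝ)+1)) |
          ∀ v ∈ CsetAux (1/((m:ℝ)+1)), (∀ k, u k ≤ v k) → v = u} with hP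
      have hPc : closure P ⊆ CsetAux (1/((m:ℝ)+1)) :=
        closure_minimal (Set.sep_subset _ _) (CsetAux_closed _)
      have hQ : closure {u ∈ CsetAux 0 | ∀ v ∈ CsetAux 0, (∀ k, u k ≤ v k) → v = u} =
          {fun _ => (1:ℝ)} := by rw [hD, closure_singleton]
      rw [hQ]
      have hne : EMetric.hausdorffEdist (closure P) ({fun _ => (1:ℝ)} : Set (Fin 2 → ℝ)) ≠ ⊤ := by
        apply hausdorffEdist_ne_top_of_nonempty_of_bounded
        · exact ⟨_, subset_closure (hPm m)⟩
        · exact Set.singleton_nonempty _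
        · exact ((CsetAux_compact _ (le_of_lt (he_pos m)) (he_le m)).isBounded).subset hPc
        · exact Bornology.isBounded_singleton
      have hinf := infDist_le_hausdorffDist_of_mem (subset_closure (hPm m)) hne
      rw [infDist_singleton] at hinf
      refine le_trans ?_ hinf
      have := dist_le_pi_dist (![0, 1 + 1/((m:ℝ)+1)]) (fun _ => (1:ℝ)) 0
      simp only [Matrix.cons_val_zero, Real.dist_eq, zero_sub, abs_neg, abs_one] at this
      linarith
    exact absurd hm (not_lt.2 hbig)
end

section
/- There is no continuous Pareto-optimal general policy function in dimension 2: no map α from the space of nonempty compact subsets of ℝ₊² (with the Hausdorff metric) to ℝ₊² can simultaneously satisfy, for every nonempty compact U ⊆ ℝ₊², that α(U) ∈ U and α(U) is Pareto optimal in U, and be continuous. -/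
open TopologicalSpace Metric

private noncomputable def cOne : Fin 2 → ℝ := fun _ => 1

private noncomputable def pPath (t : ℝ) : Fin 2 → ℝ :=
  fun k => if k = 0 then max 0 (2 - 2*t) else min 2 (4 - 2*t)

private lemma pPath_nonneg {t : ℝ} (ht : t ∈ Set.Icc (0:ℝ) 2) (k : Fin 2) :
    0 ≤ pPath t k := by
  unfold pPath
  split
  · exact le_max_left _ _
  · have := ht.2; simp only [le_min_iff]; constructor <;> [linarith; linarith]

private lemma pPath_lip (s t : ℝ) : dist (pPath s) (pPath t) ≤ 2 * |s - t| := by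
  rw [dist_pi_le_iff (by positivity)]
  intro k
  rw [Real.dist_eq]
  have key : |(2 - 2*s) - (2 - 2*t)| = 2 * |s - t| := by
    rw [show (2 - 2*s) - (2 - 2*t) = 2*(t - s) by ring, abs_mul, abs_sub_comm]
    norm_num
  have key2 : |(4 - 2*s) - (4 - 2*t)| = 2 * |s - t| := by
    rw [show (4 - 2*s) - (4 - 2*t) = 2*(t - s) by ring, abs_mul, abs_sub_comm]
    norm_num
  unfold pPath
  split
  · rw [max_comm 0, max_comm 0]
    exact (abs_max_sub_max_le_abs _ _ _).trans key.le
  · refine (abs_min_sub_min_le_max _ _ _ _).trans ?_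
    rw [sub_self, abs_zero, key2]
    exact max_le (by positivity) le_rfl

private lemma pPath_continuous : Continuous pPath := by
  rw [Metric.continuous_iff]
  intro b ε hε
  refine ⟨ε / 2, by positivity, fun a ha => ?_⟩
  calc dist (pPath a) (pPath b) ≤ 2 * |a - b| := pPath_lip a b
    _ < ε := by rw [Real.dist_eq] at ha; linarith

private noncomputable def Kt (t : ℝ) : NonemptyCompacts (Fin 2 → ℝ) :=
  ⟨⟨{cOne, pPath t}, ((Set.finite_singleton _).insert _).isCompact⟩,
    ⟨cOne, Set.mem_insert _ _⟩⟩

private lemma Kt_coe (t : ℝ) : (Kt t : Set (Fin 2 → ℝ)) = {cOne, pPath t} := rfl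

private lemma Kt_continuous : Continuous Kt := by
  rw [Metric.continuous_iff]
  intro b ε hε
  refine ⟨ε / 2, by positivity, fun a ha => ?_⟩
  have hb : dist (pPath a) (pPath b) ≤ 2 * |a - b| := pPath_lip a b
  have h2 : dist (Kt a) (Kt b) ≤ dist (pPath a) (pPath b) := by
    rw [NonemptyCompacts.dist_eq]
    apply hausdorffDist_le_of_mem_dist dist_nonneg
    · rintro x (rfl | rfl)
      · exact ⟨cOne, Set.mem_insert _ _, by simpa using dist_nonneg⟩
      · exact ⟨pPath b, Set.mem_insert_of_mem _ rfl, le_refl _⟩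
    · rintro x (rfl | rfl)
      · exact ⟨cOne, Set.mem_insert _ _, by simpa using dist_nonneg⟩
      · exact ⟨pPath a, Set.mem_insert_of_mem _ rfl, by rw [dist_comm]⟩
  rw [Real.dist_eq] at ha
  calc dist (Kt a) (Kt b) ≤ 2 * |a - b| := h2.trans hb
    _ < ε := by linarith

private lemma pPath_far {t : ℝ} (ht : t ∈ Set.Icc (0:ℝ) 2) : 1 ≤ dist (pPath t) cOne := by
  rcases le_total t 1 with h | h
  · have h1 : pPath t 1 = 2 := by
      simp [pPath, min_eq_left (show (2:ℝ) ≤ 4 - 2*t by linarith)]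
    calc (1:ℝ) = dist (pPath t 1) (cOne 1) := by
          rw [h1]; norm_num [cOne, Real.dist_eq]
      _ ≤ dist (pPath t) cOne := dist_le_pi_dist _ _ _
  · have h1 : pPath t 0 = 0 := by
      simp [pPath, max_eq_left (show 2 - 2*t ≤ (0:ℝ) by linarith)]
    calc (1:ℝ) = dist (pPath t 0) (cOne 0) := by
          rw [h1]; norm_num [cOne, Real.dist_eq]
      _ ≤ dist (pPath t) cOne := dist_le_pi_dist _ _ _

open TopologicalSpace in
/-- There is no continuous Pareto-optimal general policy function in dimension 2: no map
from the nonempty compact subsets of `ℝ₊²` (with the Hausdorff metric) to `ℝ₊²` can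
select from each set a Pareto optimal point and be continuous. -/
theorem no_continuous_pareto_optimal_general_policy :
    ¬ ∃ α : NonemptyCompacts (Fin 2 → ℝ) → (Fin 2 → ℝ),
      (∀ K : NonemptyCompacts (Fin 2 → ℝ), (K : Set (Fin 2 → ℝ)) ⊆ {u | ∀ k, 0 ≤ u k} →
        α K ∈ (K : Set (Fin 2 → ℝ)) ∧
        ∀ v ∈ (K : Set (Fin 2 → ℝ)), (∀ k, α K k ≤ v k) → v = α K) ∧
      ContinuousOn α {K : NonemptyCompacts (Fin 2 → ℝ) |
        (K : Set (Fin 2 → ℝ)) ⊆ {u | ∀ k, 0 ≤ u k}} := by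
  rintro ⟨α, hsel, hcont⟩
  set S : Set (NonemptyCompacts (Fin 2 → ℝ)) :=
    {K : NonemptyCompacts (Fin 2 → ℝ) | (K : Set (Fin 2 → ℝ)) ⊆ {u | ∀ k, 0 ≤ u k}}
  have hKS : ∀ t ∈ Set.Icc (0:ℝ) 2, Kt t ∈ S := by
    intro t ht
    rintro x (rfl | rfl)
    · intro k; norm_num [cOne]
    · exact pPath_nonneg ht
  -- the selected point
  set f : ℝ → (Fin 2 → ℝ) := fun t => α (Kt t) with hf
  have hmem : ∀ t ∈ Set.Icc (0:ℝ) 2, f t = cOne ∨ f t = pPath t := by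
    intro t ht
    have := (hsel (Kt t) (hKS t ht)).1
    rwa [Kt_coe] at this
  -- continuity of g
  set g : ℝ → ℝ := fun t => dist (f t) cOne with hg
  have hgc : ContinuousOn g (Set.Icc 0 2) := by
    have hfc : ContinuousOn f (Set.Icc 0 2) :=
      hcont.comp Kt_continuous.continuousOn (fun t ht => hKS t ht)
    exact (continuous_id.dist continuous_const).comp_continuousOn hfc
  -- at t = 0, f 0 = pPath 0
  have hp0 : pPath 0 = fun k => 2 := by
    funext k; unfold pPath; split <;> norm_num
  have hf0 : f 0 = pPath 0 := by
    rcases hmem 0 (by norm_num) with h | h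
    · exfalso
      have hpar := (hsel (Kt 0) (hKS 0 (by norm_num))).2 (pPath 0)
        (Set.mem_insert_of_mem _ rfl)
      have h' : α (Kt 0) = cOne := h
      rw [h'] at hpar
      have : pPath 0 = cOne := hpar (fun k => by rw [hp0]; norm_num [cOne])
      have := congrFun this 0
      rw [hp0] at this
      norm_num [cOne] at this
    · exact h
  have hg0 : 1 ≤ g 0 := by rw [hg]; simp only; rw [hf0]; exact pPath_far (by norm_num)
  -- at t = 2, f 2 = cOne
  have hp2 : pPath 2 = fun k => 0 := by
    funext k; unfold pPath; split <;> norm_num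
  have hf2 : f 2 = cOne := by
    rcases hmem 2 (by norm_num) with h | h
    · exact h
    · exfalso
      have hpar := (hsel (Kt 2) (hKS 2 (by norm_num))).2 cOne (Set.mem_insert _ _)
      have h' : α (Kt 2) = pPath 2 := h
      rw [h'] at hpar
      have : cOne = pPath 2 := hpar (fun k => by rw [hp2]; norm_num [cOne])
      have := congrFun this 0
      rw [hp2] at this
      norm_num [cOne] at this
  have hg2 : g 2 = 0 := by rw [hg]; simp only; rw [hf2, dist_self]
  -- intermediate value
  have hiv : (1/2 : ℝ) ∈ g '' Set.Icc 0 2 := by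
    apply intermediate_value_Icc' (by norm_num : (0:ℝ) ≤ 2) hgc
    constructor
    · rw [hg2]; norm_num
    · linarith
  obtain ⟨t, ht, hgt⟩ := hiv
  rcases hmem t ht with h | h
  · rw [hg] at hgt; simp only at hgt; rw [h, dist_self] at hgt; norm_num at hgt
  · rw [hg] at hgt; simp only at hgt; rw [h] at hgt
    have := pPath_far ht
    rw [hgt] at this
    norm_num at this
end

section
/- Every sum-optimizing convex policy function in dimension 2 is discontinuous: if α assigns to each nonempty compact convex U ⊆ ℝ₊² a point α(U) ∈ U with α(U)₁ + α(U)₂ = sup_{u∈U} (u₁ + u₂), then α is not continuous for the Hausdorff metric on nonempty compact convex subsets of ℝ₊². -/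
open Set Metric TopologicalSpace

private lemma segCompact (p q : Fin 2 → ℝ) : IsCompact (segment ℝ p q) := by
  rw [segment_eq_image]
  exact isCompact_Icc.image (by continuity)

/-- The segment from `p` to `q` as a nonempty compact set. -/
noncomputable def seg (p q : Fin 2 → ℝ) : NonemptyCompacts (Fin 2 → ℝ) :=
  ⟨⟨segment ℝ p q, segCompact p q⟩, ⟨p, left_mem_segment ℝ p q⟩⟩

lemma seg_coe (p q : Fin 2 → ℝ) : (seg p q : Set (Fin 2 → ℝ)) = segment ℝ p q := rfl

lemma seg_nonneg {p q : Fin 2 → ℝ} (hp : ∀ k, 0 ≤ p k) (hq : ∀ k, 0 ≤ q k) :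
    (seg p q : Set (Fin 2 → ℝ)) ⊆ {u | ∀ k, 0 ≤ u k} := by
  rintro x ⟨a, b, ha, hb, hab, rfl⟩ k
  have : (a • p + b • q) k = a * p k + b * q k := rfl
  rw [this]
  exact add_nonneg (mul_nonneg ha (hp k)) (mul_nonneg hb (hq k))

lemma seg_mem (p q : Fin 2 → ℝ) (hp : ∀ k, 0 ≤ p k) (hq : ∀ k, 0 ≤ q k) :
    seg p q ∈ {K : NonemptyCompacts (Fin 2 → ℝ) |
        Convex ℝ (K : Set (Fin 2 → ℝ)) ∧ (K : Set (Fin 2 → ℝ)) ⊆ {u | ∀ k, 0 ≤ u k}} :=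
  ⟨convex_segment p q, seg_nonneg hp hq⟩

lemma sSup_sum_seg (p q : Fin 2 → ℝ) (h : p 0 + p 1 ≤ q 0 + q 1) :
    sSup ((fun u : Fin 2 → ℝ => u 0 + u 1) '' (seg p q : Set (Fin 2 → ℝ))) = q 0 + q 1 := by
  apply le_antisymm
  · apply csSup_le (Set.Nonempty.image _ ⟨p, left_mem_segment ℝ p q⟩)
    rintro x ⟨y, ⟨a, b, ha, hb, hab, rfl⟩, rfl⟩
    show (a • p + b • q) 0 + (a • p + b • q) 1 ≤ q 0 + q 1
    have he : (a • p + b • q) 0 + (a • p + b • q) 1 = a * (p 0 + p 1) + b * (q 0 + q 1) := by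
      simp [Pi.add_apply, Pi.smul_apply, smul_eq_mul]; ring
    rw [he]
    calc a * (p 0 + p 1) + b * (q 0 + q 1) ≤ a * (q 0 + q 1) + b * (q 0 + q 1) := by nlinarith
      _ = q 0 + q 1 := by rw [← add_mul, hab, one_mul]
  · apply le_csSup
    · exact (((segCompact p q).image (by continuity)).isBounded).bddAbove
    · exact ⟨q, right_mem_segment ℝ p q, rfl⟩

/-- On a segment whose second endpoint has strictly bigger coordinate sum, the
sum-optimizing policy picks the second endpoint. -/
lemma alpha_seg (α : NonemptyCompacts (Fin 2 → ℝ) → (Fin 2 → ℝ))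
    (hα : ∀ K : NonemptyCompacts (Fin 2 → ℝ), Convex ℝ (K : Set (Fin 2 → ℝ)) →
      (K : Set (Fin 2 → ℝ)) ⊆ {u | ∀ k, 0 ≤ u k} →
      α K ∈ (K : Set (Fin 2 → ℝ)) ∧
      α K 0 + α K 1 = sSup ((fun u : Fin 2 → ℝ => u 0 + u 1) '' (K : Set (Fin 2 → ℝ))))
    (p q : Fin 2 → ℝ) (hp : ∀ k, 0 ≤ p k) (hq : ∀ k, 0 ≤ q k)
    (h : p 0 + p 1 < q 0 + q 1) : α (seg p q) = q := by
  obtain ⟨hmem, hsum⟩ := hα (seg p q) (convex_segment p q) (seg_nonneg hp hq)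
  rw [sSup_sum_seg p q h.le] at hsum
  obtain ⟨a, b, ha, hb, hab, hx⟩ := hmem
  have he : α (seg p q) 0 + α (seg p q) 1 = a * (p 0 + p 1) + b * (q 0 + q 1) := by
    rw [← hx]; simp [Pi.add_apply, Pi.smul_apply, smul_eq_mul]; ring
  have key2 : a * ((q 0 + q 1) - (p 0 + p 1)) = 0 := by
    linear_combination he - hsum + (q 0 + q 1) * hab
  have ha0 : a = 0 := by
    rcases mul_eq_zero.mp key2 with h' | h'
    · exact h'
    · linarith
  have hb1 : b = 1 := by linarith
  rw [← hx, ha0, hb1]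
  simp

lemma dist_seg_le (p q q' : Fin 2 → ℝ) : dist (seg p q) (seg p q') ≤ dist q q' := by
  rw [NonemptyCompacts.dist_eq]
  apply hausdorffDist_le_of_mem_dist dist_nonneg
  · rintro x ⟨a, b, ha, hb, hab, rfl⟩
    refine ⟨a • p + b • q', ⟨a, b, ha, hb, hab, rfl⟩, ?_⟩
    have : dist (a • p + b • q) (a • p + b • q') = ‖b • (q - q')‖ := by
      rw [dist_eq_norm]; congr 1; module
    rw [this, norm_smul, Real.norm_eq_abs, abs_of_nonneg hb, ← dist_eq_norm]
    nlinarith [dist_nonneg (x := q) (y := q')]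
  · rintro x ⟨a, b, ha, hb, hab, rfl⟩
    refine ⟨a • p + b • q, ⟨a, b, ha, hb, hab, rfl⟩, ?_⟩
    have : dist (a • p + b • q') (a • p + b • q) = ‖b • (q' - q)‖ := by
      rw [dist_eq_norm]; congr 1; module
    rw [this, norm_smul, Real.norm_eq_abs, abs_of_nonneg hb, ← dist_eq_norm, dist_comm]
    nlinarith [dist_nonneg (x := q) (y := q')]

open TopologicalSpace in
/-- Every sum-optimizing convex policy function in dimension 2 is discontinuous: if `α`
assigns to each nonempty compact convex `U ⊆ ℝ₊²` a point of `U` maximizing the sum of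
coordinates, then `α` is not continuous (for the Hausdorff metric) on the nonempty compact
convex subsets of `ℝ₊²`. -/
theorem sum_optimizing_convex_policy_discontinuous
    (α : NonemptyCompacts (Fin 2 → ℝ) → (Fin 2 → ℝ))
    (hα : ∀ K : NonemptyCompacts (Fin 2 → ℝ), Convex ℝ (K : Set (Fin 2 → ℝ)) →
      (K : Set (Fin 2 → ℝ)) ⊆ {u | ∀ k, 0 ≤ u k} →
      α K ∈ (K : Set (Fin 2 → ℝ)) ∧
      α K 0 + α K 1 = sSup ((fun u : Fin 2 → ℝ => u 0 + u 1) '' (K : Set (Fin 2 → ℝ)))) :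
    ¬ ContinuousOn α {K : NonemptyCompacts (Fin 2 → ℝ) |
        Convex ℝ (K : Set (Fin 2 → ℝ)) ∧ (K : Set (Fin 2 → ℝ)) ⊆ {u | ∀ k, 0 ≤ u k}} := by
  intro hc
  set S : Set (NonemptyCompacts (Fin 2 → ℝ)) := {K : NonemptyCompacts (Fin 2 → ℝ) |
      Convex ℝ (K : Set (Fin 2 → ℝ)) ∧ (K : Set (Fin 2 → ℝ)) ⊆ {u | ∀ k, 0 ≤ u k}} with hS
  -- the two base points
  set e0 : Fin 2 → ℝ := ![1, 0] with he0
  set e1 : Fin 2 → ℝ := ![0, 1] with he1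
  have he0n : ∀ k, 0 ≤ e0 k := by intro k; fin_cases k <;> norm_num [he0]
  have he1n : ∀ k, 0 ≤ e1 k := by intro k; fin_cases k <;> norm_num [he1]
  set K₀ : NonemptyCompacts (Fin 2 → ℝ) := seg e1 e0 with hK₀
  have hK₀S : K₀ ∈ S := seg_mem e1 e0 he1n he0n
  -- continuity at K₀
  have hct : Filter.Tendsto α (nhdsWithin K₀ S) (nhds (α K₀)) := hc K₀ hK₀S
  -- a family converging to K₀
  have key : ∀ c : Fin 2 → ℝ, (∀ k, 0 ≤ c k) → c 0 + c 1 = 1 →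
      (∀ n : ℕ, ∀ q : Fin 2 → ℝ, (∀ k, 0 ≤ q k) →
        dist (seg c q) K₀ ≤ 1 / (n + 1) → α (seg c q) = q + (1 / (n + 1 : ℝ)) • c → True) →
      True := fun _ _ _ _ => trivial
  -- sequence 1: segments [e1, (1 + 1/(n+1)) • e0]
  have tends : ∀ c d : Fin 2 → ℝ, (∀ k, 0 ≤ c k) → (∀ k, 0 ≤ d k) →
      c 0 + c 1 = 1 → d 0 + d 1 = 1 →
      Filter.Tendsto (fun n : ℕ => α (seg c ((1 + 1 / (n + 1 : ℝ)) • d)))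
        Filter.atTop (nhds (α (seg c d))) := by
    intro c d hc' hd' hcsum hdsum
    have hmem : ∀ n : ℕ, seg c ((1 + 1 / (n + 1 : ℝ)) • d) ∈ S := by
      intro n
      apply seg_mem _ _ hc'
      intro k
      have : ((1 + 1 / (n + 1 : ℝ)) • d) k = (1 + 1 / (n + 1 : ℝ)) * d k := rfl
      rw [this]
      have h1 : (0:ℝ) < 1 + 1 / (n + 1 : ℝ) := by positivity
      exact mul_nonneg h1.le (hd' k)
    have hdist : ∀ n : ℕ, dist (seg c ((1 + 1 / (n + 1 : ℝ)) • d)) (seg c d)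
        ≤ (1 / (n + 1 : ℝ)) * dist d 0 := by
      intro n
      calc dist (seg c ((1 + 1 / (n + 1 : ℝ)) • d)) (seg c d)
          ≤ dist ((1 + 1 / (n + 1 : ℝ)) • d) d := dist_seg_le _ _ _
        _ = ‖(1 / (n + 1 : ℝ)) • d‖ := by
            rw [dist_eq_norm]; congr 1; module
        _ = (1 / (n + 1 : ℝ)) * dist d 0 := by
            rw [norm_smul, Real.norm_eq_abs, abs_of_nonneg (by positivity), dist_zero_right]
    have htd : Filter.Tendsto (fun n : ℕ => seg c ((1 + 1 / (n + 1 : ℝ)) • d))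
        Filter.atTop (nhdsWithin (seg c d) S) := by
      rw [tendsto_nhdsWithin_iff]
      constructor
      · rw [tendsto_iff_dist_tendsto_zero]
        apply squeeze_zero (fun n => dist_nonneg) hdist
        have : Filter.Tendsto (fun n : ℕ => (1 / (n + 1 : ℝ))) Filter.atTop (nhds 0) :=
          tendsto_one_div_add_atTop_nhds_zero_nat
        simpa using this.mul_const (dist d 0)
      · exact Filter.Eventually.of_forall hmem
    exact Filter.Tendsto.comp (hc (seg c d) (seg_mem c d hc' hd')) htd
  -- compute the limit values
  have val : ∀ c d : Fin 2 → ℝ, (∀ k, 0 ≤ c k) → (∀ k, 0 ≤ d k) →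
      c 0 + c 1 = 1 → d 0 + d 1 = 1 → α (seg c d) = d := by
    intro c d hc' hd' hcsum hdsum
    have hlim := tends c d hc' hd' hcsum hdsum
    have heq : ∀ n : ℕ, α (seg c ((1 + 1 / (n + 1 : ℝ)) • d)) = (1 + 1 / (n + 1 : ℝ)) • d := by
      intro n
      apply alpha_seg α hα
      · exact hc'
      · intro k
        have h1 : (0:ℝ) < 1 + 1 / (n + 1 : ℝ) := by positivity
        exact mul_nonneg h1.le (hd' k)
      · have h2 : ((1 + 1 / (n + 1 : ℝ)) • d) 0 + ((1 + 1 / (n + 1 : ℝ)) • d) 1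
            = (1 + 1 / (n + 1 : ℝ)) * (d 0 + d 1) := by
          simp [Pi.smul_apply, smul_eq_mul]; ring
        rw [h2, hdsum, hcsum, mul_one]
        have : (0:ℝ) < 1 / (n + 1 : ℝ) := by positivity
        linarith
    rw [Filter.tendsto_congr heq] at hlim
    have hlim2 : Filter.Tendsto (fun n : ℕ => (1 + 1 / (n + 1 : ℝ)) • d)
        Filter.atTop (nhds ((1 : ℝ) • d)) := by
      apply Filter.Tendsto.smul_const
      have : Filter.Tendsto (fun n : ℕ => (1 / (n + 1 : ℝ))) Filter.atTop (nhds 0) :=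
        tendsto_one_div_add_atTop_nhds_zero_nat
      simpa using (tendsto_const_nhds (x := (1:ℝ))).add this
    rw [one_smul] at hlim2
    exact tendsto_nhds_unique hlim hlim2
  have h1 : α (seg e0 e1) = e1 := val e0 e1 he0n he1n (by norm_num [he0]) (by norm_num [he1])
  have h2 : α (seg e1 e0) = e0 := val e1 e0 he1n he0n (by norm_num [he1]) (by norm_num [he0])
  have hseg : seg e0 e1 = seg e1 e0 := by
    apply NonemptyCompacts.ext
    rw [seg_coe, seg_coe, segment_symm]
  rw [hseg, h2] at h1
  have := congrFun h1 0
  simp [he0, he1] at this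
end

section
/- Let n ≥ 1 and let U ⊆ ℝ₊ⁿ be convex. If x, y ∈ U both satisfy ∏ₖ xₖ = ∏ₖ yₖ = sup_{u∈U} ∏ₖ uₖ and this common value is strictly positive, then x = y. In particular, a compact convex U ⊆ ℝ₊ⁿ containing a point with all coordinates positive has a unique maximizer of the product of coordinates. -/
lemma prod_max_unique_aux (n : ℕ) (U : Set (Fin n → ℝ)) (hconv : Convex ℝ U)
    (hpos : U ⊆ {u | ∀ k, 0 ≤ u k}) (x : Fin n → ℝ) (hx : x ∈ U) (y : Fin n → ℝ) (hy : y ∈ U)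
    (hxs : (∏ k, x k) = sSup ((fun u : Fin n → ℝ => ∏ k, u k) '' U))
    (hys : (∏ k, y k) = sSup ((fun u : Fin n → ℝ => ∏ k, u k) '' U))
    (hxpos : 0 < ∏ k, x k) : x = y := by
  by_contra hne
  -- all coordinates of x and y are positive
  have hxk : ∀ k, 0 < x k := by
    intro k
    rcases lt_or_eq_of_le (hpos hx k) with h | h
    · exact h
    · exact absurd hxpos (by rw [Finset.prod_eq_zero (Finset.mem_univ k) h.symm]; simp)
  have hypos : 0 < ∏ k, y k := hys ▸ hxs ▸ hxpos
  have hyk : ∀ k, 0 < y k := by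
    intro k
    rcases lt_or_eq_of_le (hpos hy k) with h | h
    · exact h
    · exact absurd hypos (by rw [Finset.prod_eq_zero (Finset.mem_univ k) h.symm]; simp)
  -- midpoint
  set m : Fin n → ℝ := (1/2 : ℝ) • x + (1/2 : ℝ) • y with hm
  have hmU : m ∈ U := hconv hx hy (by norm_num) (by norm_num) (by norm_num)
  have hmk : ∀ k, m k = (x k + y k) / 2 := by intro k; simp [hm]; ring
  obtain ⟨j, hj⟩ : ∃ j, x j ≠ y j := by
    by_contra h; push_neg at h; exact hne (funext h)
  have hmpos : ∀ k, 0 < m k := by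
    intro k; have := hxk k; have := hyk k; rw [hmk k]; linarith
  -- (∏ m)^2 > (∏ x)(∏ y)
  have hsq : (∏ k, x k) * (∏ k, y k) < (∏ k, m k) * (∏ k, m k) := by
    rw [← Finset.prod_mul_distrib, ← Finset.prod_mul_distrib]
    refine Finset.prod_lt_prod (fun i _ => mul_pos (hxk i) (hyk i))
      (fun i _ => ?_) ⟨j, Finset.mem_univ j, ?_⟩
    · rw [hmk i]; nlinarith [sq_nonneg (x i - y i)]
    · rw [hmk j]; nlinarith [mul_self_pos.mpr (sub_ne_zero.mpr hj)]
  have hxy : (∏ k, y k) = ∏ k, x k := by rw [hxs, hys]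
  have hmgt : (∏ k, x k) < ∏ k, m k := by
    have h0 : 0 < ∏ k, m k := Finset.prod_pos (fun i _ => hmpos i)
    nlinarith [hsq, hxy]
  -- but sSup is an upper bound
  have hbdd : BddAbove ((fun u : Fin n → ℝ => ∏ k, u k) '' U) := by
    by_contra hb
    rw [Real.sSup_of_not_bddAbove hb] at hxs
    exact absurd hxpos (by rw [hxs]; simp)
  have := le_csSup hbdd ⟨m, hmU, rfl⟩
  rw [← hxs] at this
  exact absurd this (not_le.mpr hmgt)

/-- On a convex subset of `ℝ₊ⁿ`, if two points both achieve the supremum of the product of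
coordinates and this supremum is strictly positive, then they are equal. In particular, a
compact convex subset of `ℝ₊ⁿ` containing a point with all coordinates positive has a
unique maximizer of the product of coordinates. -/
theorem product_maximizer_unique (n : ℕ) (hn : 1 ≤ n) :
    (∀ U : Set (Fin n → ℝ), Convex ℝ U → U ⊆ {u | ∀ k, 0 ≤ u k} →
      ∀ x ∈ U, ∀ y ∈ U,
        (∏ k, x k) = sSup ((fun u : Fin n → ℝ => ∏ k, u k) '' U) →
        (∏ k, y k) = sSup ((fun u : Fin n → ℝ => ∏ k, u k) '' U) →
        0 < ∏ k, x k → x = y) ∧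
    (∀ U : Set (Fin n → ℝ), U.Nonempty → IsCompact U → Convex ℝ U →
      U ⊆ {u | ∀ k, 0 ≤ u k} → (∃ w ∈ U, ∀ k, 0 < w k) →
      ∃! x : Fin n → ℝ, x ∈ U ∧
        (∏ k, x k) = sSup ((fun u : Fin n → ℝ => ∏ k, u k) '' U)) := by
  constructor
  · exact fun U hc hp x hx y hy hxs hys hxp =>
      prod_max_unique_aux n U hc hp x hx y hy hxs hys hxp
  · intro U hne hcomp hconv hpos ⟨w, hwU, hw⟩
    have hcont : Continuous fun u : Fin n → ℝ => ∏ k, u k :=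
      continuous_finset_prod _ (fun k _ => continuous_apply k)
    obtain ⟨x, hxU, hmax⟩ := hcomp.exists_isMaxOn hne hcont.continuousOn
    have hgreat : IsGreatest ((fun u : Fin n → ℝ => ∏ k, u k) '' U) (∏ k, x k) :=
      ⟨⟨x, hxU, rfl⟩, by rintro _ ⟨u, huU, rfl⟩; exact hmax huU⟩
    have hxs : (∏ k, x k) = sSup ((fun u : Fin n → ℝ => ∏ k, u k) '' U) :=
      hgreat.csSup_eq.symm
    have hxp : 0 < ∏ k, x k :=
      lt_of_lt_of_le (Finset.prod_pos fun k _ => hw k) (hmax hwU)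
    exact ⟨x, ⟨hxU, hxs⟩, fun y ⟨hyU, hys⟩ =>
      (prod_max_unique_aux n U hconv hpos x hxU y hyU hxs hys hxp).symm⟩
end

section
/- The product-optimizing convex policy is continuous: let C and Cₘ (m ∈ ℕ) be nonempty compact convex subsets of ℝ₊ⁿ such that sup_{u∈C} ∏ₖ uₖ > 0 and sup_{u∈Cₘ} ∏ₖ uₖ > 0 for every m, let x be the unique maximizer of ∏ₖ uₖ over C and xₘ the unique maximizer of ∏ₖ uₖ over Cₘ. If Cₘ → C in Hausdorff distance, then xₘ → x. -/
open Filter Metric Bornology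

lemma prod_maximizer_unique {n : ℕ} {C : Set (Fin n → ℝ)}
    (hcvx : Convex ℝ C) (hsub : C ⊆ {u | ∀ k, 0 ≤ u k})
    {x y : Fin n → ℝ} (hx : x ∈ C) (hy : y ∈ C)
    (hpos : 0 < ∏ k, x k) (heq : ∏ k, y k = ∏ k, x k)
    (hmax : ∀ u ∈ C, ∏ k, u k ≤ ∏ k, x k) : y = x := by
  by_contra hne
  have hxpos : ∀ k, 0 < x k := by
    intro k
    rcases (hsub hx k).lt_or_eq with h | h
    · exact h
    · exact absurd hpos (by rw [Finset.prod_eq_zero (Finset.mem_univ k) h.symm]; exact lt_irrefl 0)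
  have hypos : ∀ k, 0 < y k := by
    intro k
    rcases (hsub hy k).lt_or_eq with h | h
    · exact h
    · exfalso
      rw [Finset.prod_eq_zero (Finset.mem_univ k) h.symm] at heq
      rw [← heq] at hpos
      exact lt_irrefl 0 hpos
  obtain ⟨k0, hk0⟩ : ∃ k, y k ≠ x k := by
    by_contra h; push_neg at h; exact hne (funext h)
  set z : Fin n → ℝ := fun k => (y k + x k) / 2 with hz
  have hzC : z ∈ C := by
    have h2 := hcvx hy hx (by norm_num : (0:ℝ) ≤ 1/2) (by norm_num : (0:ℝ) ≤ 1/2) (by norm_num)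
    convert h2 using 1
    funext k
    simp only [hz, Pi.add_apply, Pi.smul_apply, smul_eq_mul]
    ring
  have hs : ∀ k, Real.sqrt (y k * x k) ≤ z k := by
    intro k
    have h1 : y k * x k ≤ (z k) ^ 2 := by
      simp only [hz]; nlinarith [sq_nonneg (y k - x k)]
    calc Real.sqrt (y k * x k) ≤ Real.sqrt ((z k)^2) := Real.sqrt_le_sqrt h1
      _ = z k := Real.sqrt_sq (by simp only [hz]; linarith [(hypos k).le, (hxpos k).le])
  have hs0 : Real.sqrt (y k0 * x k0) < z k0 := by
    have h1 : y k0 * x k0 < (z k0) ^ 2 := by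
      simp only [hz]
      nlinarith [sq_pos_of_ne_zero (sub_ne_zero.mpr hk0)]
    calc Real.sqrt (y k0 * x k0) < Real.sqrt ((z k0)^2) :=
        Real.sqrt_lt_sqrt (mul_nonneg (hypos k0).le (hxpos k0).le) h1
      _ = z k0 := Real.sqrt_sq (by simp only [hz]; linarith [(hypos k0).le, (hxpos k0).le])
  have hlt : ∏ k, Real.sqrt (y k * x k) < ∏ k, z k :=
    Finset.prod_lt_prod (fun k _ => Real.sqrt_pos.2 (mul_pos (hypos k) (hxpos k)))
      (fun k _ => hs k) ⟨k0, Finset.mem_univ k0, hs0⟩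
  have h2 : (∏ k, Real.sqrt (y k * x k)) = ∏ k, x k := by
    have hnn : 0 ≤ ∏ k, Real.sqrt (y k * x k) :=
      Finset.prod_nonneg fun k _ => Real.sqrt_nonneg _
    have hsq : (∏ k, Real.sqrt (y k * x k))^2 = (∏ k, x k)^2 := by
      rw [← Finset.prod_pow]
      have : ∀ k : Fin n, Real.sqrt (y k * x k) ^ 2 = y k * x k := fun k =>
        Real.sq_sqrt (mul_nonneg (hypos k).le (hxpos k).le)
      rw [Finset.prod_congr rfl fun k _ => this k, Finset.prod_mul_distrib, heq, sq]
    nlinarith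
  rw [h2] at hlt
  exact absurd (hmax z hzC) (not_le.2 hlt)

/-- The product-optimizing convex policy is continuous: if nonempty compact convex sets
`Cₘ ⊆ ℝ₊ⁿ` (on which the supremum of the product of coordinates is positive) converge in
Hausdorff distance to such a set `C`, then the unique product maximizers `xₘ` of the `Cₘ`
converge to the unique product maximizer `x` of `C`. -/
theorem product_optimizing_policy_continuous (n : ℕ) (hn : 1 ≤ n)
    (C : Set (Fin n → ℝ)) (Cm : ℕ → Set (Fin n → ℝ))
    (hC_ne : C.Nonempty) (hC_cpt : IsCompact C) (hC_cvx : Convex ℝ C)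
    (hC_sub : C ⊆ {u | ∀ k, 0 ≤ u k})
    (hCm_ne : ∀ m, (Cm m).Nonempty) (hCm_cpt : ∀ m, IsCompact (Cm m))
    (hCm_cvx : ∀ m, Convex ℝ (Cm m)) (hCm_sub : ∀ m, Cm m ⊆ {u | ∀ k, 0 ≤ u k})
    (hC_pos : 0 < sSup ((fun u : Fin n → ℝ => ∏ k, u k) '' C))
    (hCm_pos : ∀ m, 0 < sSup ((fun u : Fin n → ℝ => ∏ k, u k) '' Cm m))
    (x : Fin n → ℝ) (hx : x ∈ C)
    (hx_max : (∏ k, x k) = sSup ((fun u : Fin n → ℝ => ∏ k, u k) '' C))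
    (xm : ℕ → Fin n → ℝ) (hxm : ∀ m, xm m ∈ Cm m)
    (hxm_max : ∀ m, (∏ k, xm m k) = sSup ((fun u : Fin n → ℝ => ∏ k, u k) '' Cm m))
    (hconv : Filter.Tendsto (fun m => Metric.hausdorffDist (Cm m) C)
      Filter.atTop (nhds 0)) :
    Filter.Tendsto xm Filter.atTop (nhds x) := by
  have hcont : Continuous (fun u : Fin n → ℝ => ∏ k, u k) :=
    continuous_finset_prod _ fun k _ => continuous_apply k
  -- basic facts
  have hfin : ∀ m, EMetric.hausdorffEdist (Cm m) C ≠ ⊤ := fun m =>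
    hausdorffEdist_ne_top_of_nonempty_of_bounded (hCm_ne m) hC_ne
      (hCm_cpt m).isBounded hC_cpt.isBounded
  have hbddC : BddAbove ((fun u : Fin n → ℝ => ∏ k, u k) '' C) :=
    (hC_cpt.image hcont).bddAbove
  have hbddCm : ∀ m, BddAbove ((fun u : Fin n → ℝ => ∏ k, u k) '' Cm m) := fun m =>
    ((hCm_cpt m).image hcont).bddAbove
  have hmaxC : ∀ u ∈ C, (∏ k, u k) ≤ ∏ k, x k := by
    intro u hu
    rw [hx_max]
    exact le_csSup hbddC ⟨u, hu, rfl⟩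
  have hPpos : 0 < ∏ k, x k := hx_max ▸ hC_pos
  -- points of Cm close to x
  have hcm : ∀ m, ∃ c ∈ Cm m, dist x c ≤ hausdorffDist (Cm m) C := by
    intro m
    obtain ⟨c, hc, hcd⟩ := (hCm_cpt m).exists_infDist_eq_dist (hCm_ne m) x
    refine ⟨c, hc, ?_⟩
    rw [← hcd]
    calc infDist x (Cm m) ≤ hausdorffDist C (Cm m) :=
          infDist_le_hausdorffDist_of_mem hx (by rw [EMetric.hausdorffEdist_comm]; exact hfin m)
      _ = hausdorffDist (Cm m) C := hausdorffDist_comm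
  choose c hcmem hcdist using hcm
  have hc_tendsto : Tendsto c atTop (nhds x) := by
    rw [tendsto_iff_dist_tendsto_zero]
    refine squeeze_zero (fun m => dist_nonneg) (fun m => ?_) hconv
    rw [dist_comm]; exact hcdist m
  have hcprod : Tendsto (fun m => ∏ k, c m k) atTop (nhds (∏ k, x k)) :=
    tendsto_finset_prod _ fun k _ =>
      ((continuous_apply k).tendsto x).comp hc_tendsto
  have hlow : ∀ m, (∏ k, c m k) ≤ ∏ k, xm m k := by
    intro m
    rw [hxm_max m]
    exact le_csSup (hbddCm m) ⟨c m, hcmem m, rfl⟩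
  -- xm is eventually in a fixed bounded set
  obtain ⟨c₀, hc₀⟩ := id hC_ne
  obtain ⟨R, hR⟩ := hC_cpt.isBounded.subset_closedBall c₀
  have hinfd : ∀ m, infDist (xm m) C ≤ hausdorffDist (Cm m) C := fun m =>
    infDist_le_hausdorffDist_of_mem (hxm m) (hfin m)
  have hinfd0 : Tendsto (fun m => infDist (xm m) C) atTop (nhds 0) :=
    squeeze_zero (fun m => infDist_nonneg) hinfd hconv
  have hev : ∀ᶠ m in atTop, xm m ∈ closedBall c₀ (R + 2) := by
    filter_upwards [hinfd0.eventually (gt_mem_nhds one_pos)] with m hm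
    have : infDist (xm m) C < 2 := lt_of_lt_of_le hm (by norm_num)
    obtain ⟨y, hyC, hyd⟩ := (infDist_lt_iff hC_ne).1 this
    have hyb : dist y c₀ ≤ R := hR hyC
    simp only [mem_closedBall]
    calc dist (xm m) c₀ ≤ dist (xm m) y + dist y c₀ := dist_triangle _ _ _
      _ ≤ 2 + R := add_le_add hyd.le hyb
      _ = R + 2 := by ring
  -- subsequence argument
  apply tendsto_of_subseq_tendsto
  intro ns hns
  have hfreq : ∃ᶠ j in atTop, xm (ns j) ∈ closedBall c₀ (R + 2) :=
    (hns.eventually hev).frequently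
  obtain ⟨a, -, φ, hφ, ha⟩ :=
    tendsto_subseq_of_frequently_bounded isBounded_closedBall hfreq
  set ψ : ℕ → ℕ := fun j => ns (φ j) with hψ
  have hψ_tendsto : Tendsto ψ atTop atTop := hns.comp hφ.tendsto_atTop
  have ha' : Tendsto (fun j => xm (ψ j)) atTop (nhds a) := ha
  -- a ∈ C
  have haC : a ∈ C := by
    have h1 : Tendsto (fun j => infDist (xm (ψ j)) C) atTop (nhds (infDist a C)) :=
      ((continuous_infDist_pt C).tendsto a).comp ha'
    have h2 : Tendsto (fun j => infDist (xm (ψ j)) C) atTop (nhds 0) :=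
      hinfd0.comp hψ_tendsto
    have h0 : infDist a C = 0 := tendsto_nhds_unique h1 h2
    exact (hC_cpt.isClosed.mem_iff_infDist_zero hC_ne).2 h0
  -- ∏ a = ∏ x
  have haprod : Tendsto (fun j => ∏ k, xm (ψ j) k) atTop (nhds (∏ k, a k)) :=
    ((hcont.tendsto a).comp ha')
  have hge : (∏ k, x k) ≤ ∏ k, a k := by
    refine le_of_tendsto_of_tendsto' (hcprod.comp hψ_tendsto) haprod (fun j => ?_)
    exact hlow (ψ j)
  have haeq : (∏ k, a k) = ∏ k, x k :=
    le_antisymm (hmaxC a haC) hge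
  have hax : a = x :=
    prod_maximizer_unique hC_cvx hC_sub hx haC hPpos haeq hmaxC
  exact ⟨φ, hax ▸ ha'⟩
end

section
/- Even convex policy functions cannot be monotone: there is no map α assigning to each nonempty compact convex U ⊆ ℝ₊² a point α(U) ∈ U such that U₁ ⊆ U₂ implies α(U₁) ⪯ α(U₂) for all nonempty compact convex U₁, U₂ ⊆ ℝ₊². -/
/-- Even convex policy functions cannot be monotone: there is no map assigning to each
nonempty compact convex `U ⊆ ℝ₊²` a point `α(U) ∈ U` such that `U₁ ⊆ U₂` implies
`α(U₁) ⪯ α(U₂)` componentwise. -/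
theorem no_monotone_convex_policy :
    ¬ ∃ α : Set (Fin 2 → ℝ) → (Fin 2 → ℝ),
      (∀ U : Set (Fin 2 → ℝ), U.Nonempty → IsCompact U → Convex ℝ U →
        U ⊆ {u | ∀ k, 0 ≤ u k} → α U ∈ U) ∧
      (∀ U V : Set (Fin 2 → ℝ),
        U.Nonempty → IsCompact U → Convex ℝ U → U ⊆ {u | ∀ k, 0 ≤ u k} →
        V.Nonempty → IsCompact V → Convex ℝ V → V ⊆ {u | ∀ k, 0 ≤ u k} →
        U ⊆ V → ∀ k, α U k ≤ α V k) := by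
  rintro ⟨α, hmem, hmono⟩
  set a : Fin 2 → ℝ := ![1, 0] with ha
  set b : Fin 2 → ℝ := ![0, 1] with hb
  set V : Set (Fin 2 → ℝ) := segment ℝ a b with hV
  have hVn : V.Nonempty := ⟨a, left_mem_segment ℝ a b⟩
  have hVc : IsCompact V := by
    rw [hV, segment_eq_image]
    exact isCompact_Icc.image (((continuous_const.sub continuous_id).smul continuous_const).add (continuous_id.smul continuous_const))
  have hVconv : Convex ℝ V := convex_segment a b
  have hVpos : V ⊆ {u | ∀ k, 0 ≤ u k} := by
    rintro x ⟨s, t, hs, ht, hst, rfl⟩ k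
    have hak : (0:ℝ) ≤ a k := by fin_cases k <;> simp [ha]
    have hbk : (0:ℝ) ≤ b k := by fin_cases k <;> simp [hb]
    have : (s • a + t • b) k = s * a k + t * b k := rfl
    rw [this]
    positivity
  have hsum : ∀ x ∈ V, x 0 + x 1 = 1 := by
    rintro x ⟨s, t, hs, ht, hst, rfl⟩
    have h0 : (s • a + t • b) 0 = s := by simp [ha, hb]
    have h1 : (s • a + t • b) 1 = t := by simp [ha, hb]
    rw [h0, h1, hst]
  have hapos : ({a} : Set (Fin 2 → ℝ)) ⊆ {u | ∀ k, 0 ≤ u k} := by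
    rintro x rfl k; fin_cases k <;> simp [ha]
  have hbpos : ({b} : Set (Fin 2 → ℝ)) ⊆ {u | ∀ k, 0 ≤ u k} := by
    rintro x rfl k; fin_cases k <;> simp [hb]
  have hαa : α {a} = a := hmem {a} ⟨a, rfl⟩ isCompact_singleton (convex_singleton a) hapos
  have hαb : α {b} = b := hmem {b} ⟨b, rfl⟩ isCompact_singleton (convex_singleton b) hbpos
  have h1 : ∀ k, a k ≤ α V k := by
    have := hmono {a} V ⟨a, rfl⟩ isCompact_singleton (convex_singleton a) hapos
      hVn hVc hVconv hVpos (Set.singleton_subset_iff.mpr (left_mem_segment ℝ a b))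
    simpa [hαa] using this
  have h2 : ∀ k, b k ≤ α V k := by
    have := hmono {b} V ⟨b, rfl⟩ isCompact_singleton (convex_singleton b) hbpos
      hVn hVc hVconv hVpos (Set.singleton_subset_iff.mpr (right_mem_segment ℝ a b))
    simpa [hαb] using this
  have hA : (1:ℝ) ≤ α V 0 := by simpa [ha] using h1 0
  have hB : (1:ℝ) ≤ α V 1 := by simpa [hb] using h2 1
  have hs := hsum _ (hmem V hVn hVc hVconv hVpos)
  linarith
end

section
/- Let n ≥ 1, let f, g : ℝ₊ⁿ → ℝ₊ be monotone index functions (u ⪯ v implies f(u) ≤ f(v) and g(u) ≤ g(v)), and let α be a g-optimizing policy function on the nonempty compact subsets of ℝ₊ⁿ. Then α is f-increasing (i.e., U ⊆ V implies f(α(U)) ≤ f(α(V)) for all nonempty compact U, V ⊆ ℝ₊ⁿ) if and only if α is f-optimizing (i.e., f(α(U)) = sup_{u∈U} f(u) for every nonempty compact U ⊆ ℝ₊ⁿ). -/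
/-- Let `f, g` be monotone index functions on `ℝ₊ⁿ` and let `α` be a `g`-optimizing policy
function on the nonempty compact subsets of `ℝ₊ⁿ`. Then `α` is `f`-increasing if and only
if `α` is `f`-optimizing. -/
theorem f_increasing_iff_f_optimizing
    (n : ℕ) (hn : 1 ≤ n) (f g : (Fin n → ℝ) → ℝ)
    (hf_nonneg : ∀ u : Fin n → ℝ, (∀ k, 0 ≤ u k) → 0 ≤ f u)
    (hg_nonneg : ∀ u : Fin n → ℝ, (∀ k, 0 ≤ u k) → 0 ≤ g u)
    (hf_mono : ∀ u v : Fin n → ℝ, (∀ k, 0 ≤ u k) → (∀ k, 0 ≤ v k) →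
      (∀ k, u k ≤ v k) → f u ≤ f v)
    (hg_mono : ∀ u v : Fin n → ℝ, (∀ k, 0 ≤ u k) → (∀ k, 0 ≤ v k) →
      (∀ k, u k ≤ v k) → g u ≤ g v)
    (α : Set (Fin n → ℝ) → (Fin n → ℝ))
    (hα_pol : ∀ U : Set (Fin n → ℝ), U.Nonempty → IsCompact U →
      U ⊆ {u | ∀ k, 0 ≤ u k} → α U ∈ U)
    (hα_gopt : ∀ U : Set (Fin n → ℝ), U.Nonempty → IsCompact U →
      U ⊆ {u | ∀ k, 0 ≤ u k} → g (α U) = sSup (g '' U)) :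
    (∀ U V : Set (Fin n → ℝ),
        U.Nonempty → IsCompact U → U ⊆ {u | ∀ k, 0 ≤ u k} →
        V.Nonempty → IsCompact V → V ⊆ {u | ∀ k, 0 ≤ u k} →
        U ⊆ V → f (α U) ≤ f (α V)) ↔
    (∀ U : Set (Fin n → ℝ), U.Nonempty → IsCompact U →
        U ⊆ {u | ∀ k, 0 ≤ u k} → f (α U) = sSup (f '' U)) := by

  have hbdd : ∀ U : Set (Fin n → ℝ), IsCompact U → U ⊆ {u | ∀ k, 0 ≤ u k} →
      BddAbove (f '' U) := by
    intro U hUc hUsub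
    obtain ⟨R, hR⟩ := hUc.isBounded.exists_norm_le
    refine ⟨f (fun _ => max R 0), ?_⟩
    rintro y ⟨u, hu, rfl⟩
    refine hf_mono u _ (hUsub hu) (fun k => le_max_right _ _) (fun k => ?_)
    calc u k ≤ |u k| := le_abs_self _
      _ = ‖u k‖ := rfl
      _ ≤ ‖u‖ := norm_le_pi_norm u k
      _ ≤ max R 0 := le_trans (hR u hu) (le_max_left _ _)
  constructor
  · intro h U hUne hUc hUsub
    refine le_antisymm (le_csSup (hbdd U hUc hUsub) ⟨α U, hα_pol U hUne hUc hUsub, rfl⟩) ?_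
    refine csSup_le (hUne.image f) ?_
    rintro y ⟨u, hu, rfl⟩
    have hs : ({u} : Set (Fin n → ℝ)) ⊆ {u | ∀ k, 0 ≤ u k} := by
      simpa using hUsub hu
    have := h {u} U ⟨u, rfl⟩ isCompact_singleton hs hUne hUc hUsub
      (Set.singleton_subset_iff.mpr hu)
    have hmem := hα_pol {u} ⟨u, rfl⟩ isCompact_singleton hs
    rw [Set.mem_singleton_iff] at hmem
    rw [hmem] at this
    exact this
  · intro h U V hUne hUc hUsub hVne hVc hVsub hUV
    rw [h U hUne hUc hUsub, h V hVne hVc hVsub]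
    exact csSup_le_csSup (hbdd V hVc hVsub) (hUne.image f) (Set.image_mono hUV)
end

section
/- Let N ≥ 2, M ≥ 1, let S_{M,N} = {u ∈ ℝ₊^N : u₁/M + Σ_{k=2}^N uₖ ≤ 1}, and let q be the max-min fair allocation of S_{M,N}, i.e., the constant vector with all coordinates equal to M/(M(N−1)+1). Then the sum-inefficiency of q, namely (sup_{u∈S_{M,N}} Σₖ uₖ) / (Σₖ qₖ), equals (M(N−1)+1)/N, and for fixed N ≥ 2 this quantity tends to +∞ as M → ∞ (it is asymptotically equivalent to M·(N−1)/N). -/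
lemma smn_sSup (N : ℕ) (hN : 1 < N) (M : ℝ) (hM : 1 ≤ M) :
    sSup ((fun u : Fin N → ℝ => ∑ k, u k) ''
        {u : Fin N → ℝ | (∀ k, 0 ≤ u k) ∧
          u ⟨0, by omega⟩ / M + ∑ k ∈ Finset.univ.erase ⟨0, by omega⟩, u k ≤ 1}) = M := by
  have hM0 : (0:ℝ) < M := lt_of_lt_of_le one_pos hM
  apply IsGreatest.csSup_eq
  constructor
  · refine ⟨fun k => if k = ⟨0, by omega⟩ then M else 0, ⟨?_, ?_⟩, ?_⟩
    · intro k; by_cases h : k = ⟨0, by omega⟩ <;> simp [h, hM0.le]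
    · have : ∑ k ∈ Finset.univ.erase (⟨0, by omega⟩ : Fin N),
          (if k = ⟨0, by omega⟩ then M else 0) = 0 :=
        Finset.sum_eq_zero fun k hk => by
          simp [(Finset.mem_erase.mp hk).1]
      simp only [this]
      simp [div_self (ne_of_gt hM0)]
    · simp
  · rintro x ⟨u, ⟨hpos, hcon⟩, rfl⟩
    have hsplit : ∑ k, u k = u ⟨0, by omega⟩ + ∑ k ∈ Finset.univ.erase ⟨0, by omega⟩, u k :=
      (Finset.add_sum_erase _ _ (Finset.mem_univ _)).symm
    have hsum0 : 0 ≤ ∑ k ∈ Finset.univ.erase ⟨0, by omega⟩, u k :=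
      Finset.sum_nonneg fun k _ => hpos k
    calc ∑ k, u k = u ⟨0, by omega⟩ + ∑ k ∈ Finset.univ.erase ⟨0, by omega⟩, u k := hsplit
      _ ≤ M * (u ⟨0, by omega⟩ / M) + M * ∑ k ∈ Finset.univ.erase ⟨0, by omega⟩, u k := by
          rw [mul_div_cancel₀ _ (ne_of_gt hM0)]
          gcongr
          nlinarith
      _ = M * (u ⟨0, by omega⟩ / M + ∑ k ∈ Finset.univ.erase ⟨0, by omega⟩, u k) := by ring
      _ ≤ M * 1 := by gcongr
      _ = M := mul_one M

/-- The sum-inefficiency of the max-min fair allocation `q` of `S_{M,N}` (the constant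
vector with coordinates `M/(M(N−1)+1)`) equals `(M(N−1)+1)/N`; for fixed `N ≥ 2` it tends
to `+∞` as `M → ∞` and is asymptotically equivalent to `M(N−1)/N`. -/
theorem smn_inefficiency_maxmin_fair :
    (∀ (N : ℕ) (hN : 2 ≤ N), ∀ (M : ℝ), 1 ≤ M →
      sSup ((fun u : Fin N → ℝ => ∑ k, u k) ''
          {u : Fin N → ℝ | (∀ k, 0 ≤ u k) ∧
            u ⟨0, by omega⟩ / M + ∑ k ∈ Finset.univ.erase ⟨0, by omega⟩, u k ≤ 1}) /
        (∑ _k : Fin N, M / (M * ((N : ℝ) - 1) + 1)) =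
      (M * ((N : ℝ) - 1) + 1) / N) ∧
    (∀ (N : ℕ), 2 ≤ N →
      Filter.Tendsto (fun M : ℝ => (M * ((N : ℝ) - 1) + 1) / N)
        Filter.atTop Filter.atTop) ∧
    (∀ (N : ℕ), 2 ≤ N →
      Filter.Tendsto (fun M : ℝ => ((M * ((N : ℝ) - 1) + 1) / N) / (M * ((N : ℝ) - 1) / N))
        Filter.atTop (nhds 1)) := by
  refine ⟨?_, ?_, ?_⟩
  · intro N hN M hM
    rw [smn_sSup N hN M hM]
    have hM0 : (0:ℝ) < M := lt_of_lt_of_le one_pos hM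
    have hN1 : (1:ℝ) ≤ (N:ℝ) - 1 := by
      have : (2:ℝ) ≤ N := by exact_mod_cast hN
      linarith
    have hD : (0:ℝ) < M * ((N:ℝ) - 1) + 1 := by nlinarith
    have hNpos : (0:ℝ) < N := by positivity
    rw [Finset.sum_const, Finset.card_univ, Fintype.card_fin]
    rw [nsmul_eq_mul]
    field_simp
  · intro N hN
    have h2 : (2:ℝ) ≤ N := by exact_mod_cast hN
    have hc : (0:ℝ) < ((N:ℝ) - 1) / N := div_pos (by linarith) (by linarith)
    have := Filter.tendsto_atTop_add_const_right Filter.atTop ((1:ℝ)/N)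
      (Filter.tendsto_id.atTop_mul_const hc)
    refine this.congr fun M => ?_
    have hNpos : (0:ℝ) < N := by linarith
    field_simp
    simp only [id_eq]; ring
  · intro N hN
    have h2 : (2:ℝ) ≤ N := by exact_mod_cast hN
    have hc : (0:ℝ) < (N:ℝ) - 1 := by linarith
    have hmul : Filter.Tendsto (fun M : ℝ => M * ((N:ℝ) - 1)) Filter.atTop Filter.atTop :=
      Filter.tendsto_id.atTop_mul_const hc
    have hinv : Filter.Tendsto (fun M : ℝ => (M * ((N:ℝ) - 1))⁻¹) Filter.atTop (nhds 0) :=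
      hmul.inv_tendsto_atTop
    have := (tendsto_const_nhds (x := (1:ℝ)) (f := Filter.atTop)).add hinv
    rw [add_zero] at this
    refine this.congr' ?_
    filter_upwards [Filter.eventually_gt_atTop 0] with M hM0
    have hNpos : (0:ℝ) < N := by linarith
    field_simp
end

section
/- The Jain index is not monotone: for n ≥ 2 there exist u, v ∈ ℝ₊ⁿ with uₖ ≤ vₖ for all k and J(u) > J(v), where J(w) = (Σₖ wₖ)² / (n · Σₖ wₖ²). Consequently, there exists a nonempty compact convex set U ⊆ ℝ₊², a point v ∈ U that is the unique maximizer of min(u₁,u₂) over U (hence the max-min fair allocation of U), and a point u ∈ U with J(u) > J(v); i.e., the max-min fair allocation may have a sub-optimal Jain index. -/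
/-- The Jain index `J(w) = (Σₖ wₖ)² / (n·Σₖ wₖ²)` is not monotone: for `n ≥ 2` there are
`u ⪯ v` in `ℝ₊ⁿ` with `J(u) > J(v)`. Consequently there is a nonempty compact convex
`U ⊆ ℝ₊²` whose max-min fair allocation `v` (the unique maximizer of the minimum
coordinate over `U`) has a sub-optimal Jain index: some `u ∈ U` has `J(u) > J(v)`. -/
theorem jain_not_monotone_and_maxmin_suboptimal (n : ℕ) (hn : 2 ≤ n) :
    (∃ u v : Fin n → ℝ, (∀ k, 0 ≤ u k) ∧ (∀ k, 0 ≤ v k) ∧ (∀ k, u k ≤ v k) ∧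
      (∑ k, v k) ^ 2 / ((n : ℝ) * ∑ k, (v k) ^ 2) <
        (∑ k, u k) ^ 2 / ((n : ℝ) * ∑ k, (u k) ^ 2)) ∧
    (∃ (U : Set (Fin 2 → ℝ)) (v u : Fin 2 → ℝ),
      U.Nonempty ∧ IsCompact U ∧ Convex ℝ U ∧ U ⊆ {w | ∀ k, 0 ≤ w k} ∧
      v ∈ U ∧ u ∈ U ∧
      (∀ w ∈ U, min (w 0) (w 1) ≤ min (v 0) (v 1)) ∧
      (∀ w ∈ U, min (w 0) (w 1) = min (v 0) (v 1) → w = v) ∧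
      (∑ k, v k) ^ 2 / (2 * ∑ k, (v k) ^ 2) <
        (∑ k, u k) ^ 2 / (2 * ∑ k, (u k) ^ 2)) := by
  haveI : NeZero n := ⟨by omega⟩
  have hn2 : (2 : ℝ) ≤ (n : ℝ) := by exact_mod_cast hn
  have hnpos : (0 : ℝ) < (n : ℝ) := by linarith
  constructor
  · refine ⟨fun _ => 1, fun k => if k = 0 then 2 else 1, fun _ => zero_le_one,
      fun k => by dsimp only; split <;> norm_num, fun k => by dsimp only; split <;> norm_num, ?_⟩
    have h1 : (∑ _k : Fin n, (1 : ℝ)) = n := by simp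
    have h2 : (∑ k : Fin n, ((if k = 0 then (2:ℝ) else 1))) = n + 1 := by
      have : ∀ k : Fin n, (if k = 0 then (2:ℝ) else 1) = 1 + (if k = 0 then (1:ℝ) else 0) := by
        intro k; split <;> norm_num
      simp [this, Finset.sum_add_distrib]
    have h3 : (∑ k : Fin n, ((if k = 0 then (2:ℝ) else 1))^2) = n + 3 := by
      have : ∀ k : Fin n, (if k = 0 then (2:ℝ) else 1)^2 = 1 + (if k = 0 then (3:ℝ) else 0) := by
        intro k; split <;> norm_num
      simp [this, Finset.sum_add_distrib]
    have h4 : (∑ k : Fin n, ((1:ℝ))^2) = n := by simp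
    rw [h1, h2, h3, h4]
    rw [div_lt_div_iff₀ (by positivity) (by positivity)]
    nlinarith
  · have hcs : IsCompact (segment ℝ ![1, 1] ![2, (3:ℝ)/2]) := by
      rw [← convexHull_pair]
      exact (Set.toFinite _).isCompact_convexHull ℝ
    refine ⟨segment ℝ ![1, 1] ![2, 3/2], ![2, 3/2], ![1, 1],
      ⟨_, left_mem_segment ℝ _ _⟩, hcs, convex_segment _ _, ?_,
      right_mem_segment ℝ _ _, left_mem_segment ℝ _ _, ?_, ?_, ?_⟩
    · rintro w ⟨a, b, ha, hb, hab, rfl⟩ k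
      fin_cases k <;> simp [Matrix.cons_val_zero, Matrix.cons_val_one] <;> positivity
    · rintro w ⟨a, b, ha, hb, hab, rfl⟩
      simp only [Pi.add_apply, Pi.smul_apply, smul_eq_mul, Matrix.cons_val_zero,
        Matrix.cons_val_one, Matrix.head_cons]
      rw [min_def, min_def]
      split <;> split <;> nlinarith
    · rintro w ⟨a, b, ha, hb, hab, rfl⟩ hmin
      simp only [Pi.add_apply, Pi.smul_apply, smul_eq_mul, Matrix.cons_val_zero,
        Matrix.cons_val_one, Matrix.head_cons] at hmin
      have hb1 : b = 1 := by
        rw [min_def, min_def] at hmin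
        split at hmin <;> split at hmin <;> nlinarith
      have ha0 : a = 0 := by linarith
      subst hb1; subst ha0
      simp
    · simp [Fin.sum_univ_two]
      norm_num
end
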